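/- The number of standard Young tableaux with entries {1,...,2m} whose shape is of the form (2^{2p}, 1^{2q}) for some nonnegative integers p, q with 4p + 2q = 2m equals C(2m-1, m). -/

import Mathlib

/-- Tableaux are represented as lists of rows of positive integers.
`IsSSYT T` : rows weakly increasing, columns strictly increasing,
row lengths weakly decreasing, no empty rows (English notation). -/
def IsSSYT (T : List (List ℕ)) : Prop :=
  (∀ r ∈ T, List.Pairwise (· ≤ ·) r) ∧
  (∀ (i j a b : ℕ), (T.getD i [])[j]? = some a → (T.getD (i+1) [])[j]? = some b → a < b) ∧
  (∀ i, (T.getD (i+1) []).length ≤ (T.getD i []).length) ∧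
  [] ∉ T

/-- Schensted row insertion.  Returns the new tableau together with the
(0-based) index of the row in which a new box was added. -/
def rinsert : List (List ℕ) → ℕ → List (List ℕ) × ℕ
  | [], x => ([[x]], 0)
  | r :: rs, x =>
    match r.findIdx? (fun t => x < t) with
    | none => ((r ++ [x]) :: rs, 0)
    | some j =>
      let y := r.getD j 0
      let p := rinsert rs y
      ((r.set j x) :: p.1, p.2 + 1)

/-- Reverse bumping through the rows above (given in reversed order). -/
def revBump : List (List ℕ) → ℕ → List (List ℕ) × ℕ
  | [], x => ([], x)
  | r :: rs, x =>
    let k := (r.takeWhile (· < x)).length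
    if k = 0 then (r :: rs, x)
    else
      let y := r.getD (k - 1) 0
      let p := revBump rs y
      ((r.set (k - 1) x) :: p.1, p.2)

/-- Schensted deletion: remove the last box of row `i` and reverse-bump,
returning the new tableau and the ejected entry. -/
def schDelete (T : List (List ℕ)) (i : ℕ) : List (List ℕ) × ℕ :=
  let r := T.getD i []
  let x := r.getLastD 0
  let r' := r.dropLast
  let p := revBump (T.take i).reverse x
  (p.1.reverse ++ (if r' = [] then ([] : List (List ℕ)) else [r']) ++ T.drop (i + 1), p.2)

/-- One step of `Carray2Dtableau`: insert `b` and append `a` at the end of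
the next row. -/
def c2dStep (T : List (List ℕ)) (p : ℕ × ℕ) : List (List ℕ) :=
  let q := rinsert T p.2
  if q.2 + 1 < q.1.length then q.1.set (q.2 + 1) ((q.1.getD (q.2 + 1) []) ++ [p.1])
  else q.1 ++ [[p.1]]

/-- The map `Carray2Dtableau` from c-arrays (lists of columns `(aᵢ, bᵢ)`) to
tableaux of double shape. -/
def c2d (S : List (ℕ × ℕ)) : List (List ℕ) := S.foldl c2dStep []

/-- One step of `Dtableau2Carray`: extract the maximal entry `x` (occurrence of
maximal column, at the end of row `i`), apply `schDelete` at row `i` ejecting `y`,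
and remove the corresponding entry of row `i-1`. -/
def d2cStep (T : List (List ℕ)) : List (List ℕ) × (ℕ × ℕ) :=
  let x := T.flatten.foldr max 0
  let cand := (List.range T.length).filter (fun i => (T.getD i []).getLastD 0 = x)
  let i := cand.foldl (fun acc i =>
      if (T.getD acc []).length < (T.getD i []).length then i else acc) 0
  let j := (T.getD i []).length - 1
  let p := schDelete T i
  let T2 := p.1.set (i - 1) ((p.1.getD (i - 1) []).eraseIdx j)
  (T2.filter (fun r => r ≠ []), (x, p.2))

def d2cAux : ℕ → List (List ℕ) → List (ℕ × ℕ)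
  | 0, _ => []
  | n + 1, T =>
    if T = [] then []
    else
      let p := d2cStep T
      d2cAux n p.1 ++ [p.2]

/-- The map `Dtableau2Carray`. -/
def d2c (T : List (List ℕ)) : List (ℕ × ℕ) := d2cAux T.flatten.length T

/-- Content of a two-rowed array: multiplicity of each value among all entries. -/
def cntA (S : List (ℕ × ℕ)) (v : ℕ) : ℕ := (S.map Prod.fst ++ S.map Prod.snd).count v

/-- Content of a tableau. -/
def cntT (T : List (List ℕ)) (v : ℕ) : ℕ := T.flatten.count v

/-- A c-array: each column `(aᵢ, bᵢ)` satisfies `bᵢ < aᵢ` and the columns are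
weakly increasing in the lexicographic order. -/
def IsCArray (S : List (ℕ × ℕ)) : Prop :=
  (∀ p ∈ S, p.2 < p.1) ∧
  List.Chain' (fun p q : ℕ × ℕ => p.1 < q.1 ∨ (p.1 = q.1 ∧ p.2 ≤ q.2)) S

/-- Normality: every value occurs at most twice, and the bottom row contains no
weakly increasing subsequence of length 3. -/
def IsNormal (S : List (ℕ × ℕ)) : Prop :=
  (∀ v, cntA S v ≤ 2) ∧
  ∀ t : List ℕ, t.Sublist (S.map Prod.snd) → t.Pairwise (· ≤ ·) → t.length ≤ 2

/-- A double shape: each row length is repeated an even number of times. -/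
def IsDoubleShape (T : List (List ℕ)) : Prop :=
  ∃ L : List ℕ, T.map List.length = L.flatMap (fun a => [a, a])

/-- A standard Young tableau with entries `{1, …, n}`. -/
def IsStandard (T : List (List ℕ)) (n : ℕ) : Prop :=
  IsSSYT T ∧ (∀ r ∈ T, List.Pairwise (· < ·) r) ∧ T.flatten.Perm (List.range' 1 n)

namespace CSDS

def ballot (w : List Bool) : Prop := ∀ i, 2 * ((w.take i).count true) ≤ i

def ballotB (w : List Bool) : Bool :=
  (List.range (w.length + 1)).all (fun i => decide (2 * ((w.take i).count true) ≤ i))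

lemma ballot_total {w : List Bool} (h : ballot w) : 2 * w.count true ≤ w.length := by
  simpa using h w.length

lemma ballotB_iff {w : List Bool} : ballotB w = true ↔ ballot w := by
  simp only [ballotB, List.all_eq_true, List.mem_range, decide_eq_true_eq]
  constructor
  · intro h i
    rcases le_or_gt i w.length with hi | hi
    · exact h i (by omega)
    · rw [List.take_of_length_le (by omega)]
      have := h w.length (by omega)
      simp only [List.take_length] at this
      omega
  · intro h i _
    exact h i

lemma ballot_append (w : List Bool) (b : Bool) :
    ballot (w ++ [b]) ↔ ballot w ∧ 2 * ((w ++ [b]).count true) ≤ w.length + 1 := by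
  constructor
  · intro h
    refine ⟨fun i => ?_, ?_⟩
    · rcases le_or_gt i w.length with hi | hi
      · have := h i
        rwa [List.take_append_of_le_length hi] at this
      · rw [List.take_of_length_le (by omega)]
        have := h w.length
        rw [List.take_append_of_le_length le_rfl, List.take_length] at this
        omega
    · have := h (w.length + 1)
      rwa [List.take_of_length_le (by simp)] at this
  · rintro ⟨h1, h2⟩ i
    rcases le_or_gt i w.length with hi | hi
    · rw [List.take_append_of_le_length hi]; exact h1 i
    · rw [List.take_of_length_le (by simp; omega)]
      omega

def lists : ℕ → List (List Bool)
  | 0 => [[]]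
  | n + 1 => (lists n).flatMap (fun w => [w ++ [false], w ++ [true]])

lemma mem_lists {n : ℕ} {w : List Bool} : w ∈ lists n ↔ w.length = n := by
  induction n generalizing w with
  | zero => simp [lists, List.length_eq_zero_iff]
  | succ n ih =>
    simp only [lists, List.mem_flatMap, List.mem_cons]
    constructor
    · rintro ⟨u, hu, h⟩
      rcases h with h | h | h <;> first
        | (subst h; simp [ih.mp hu]) | exact absurd h (by simp)
    · intro hw
      have hne : w ≠ [] := by rintro rfl; simp at hw
      refine ⟨w.dropLast, ih.mpr (by simp [hw]), ?_⟩
      have := List.dropLast_append_getLast hne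
      cases hb : w.getLast hne with
      | false => left; rw [← hb]; exact this.symm
      | true => right; left; rw [← hb]; exact this.symm

lemma nodup_lists (n : ℕ) : (lists n).Nodup := by
  induction n with
  | zero => simp [lists]
  | succ n ih =>
    rw [lists]
    refine List.nodup_flatMap.mpr ⟨fun w _ => by simp, ?_⟩
    refine ih.imp ?_
    intro a b hab
    simp only [Function.onFun, List.disjoint_left, List.mem_cons, List.not_mem_nil, or_false]
    rintro x (rfl | rfl) h <;> rcases h with h | h <;>
      exact hab (by simpa using congrArg List.dropLast h)



lemma ballot_nil : ballot [] := by intro i; simp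

lemma lists_zero : lists 0 = [[]] := rfl
lemma lists_succ (n : ℕ) : lists (n+1) = (lists n).flatMap (fun w => [w ++ [false], w ++ [true]]) := rfl

def cnt (n k : ℕ) : ℕ :=
  ((lists n).filter (fun w => ballotB w && (w.count true == k))).length

lemma length_filter_flatMap {α β : Type*} (l : List α) (f : α → List β) (p : β → Bool) :
    ((l.flatMap f).filter p).length = (l.map (fun a => ((f a).filter p).length)).sum := by
  induction l with
  | nil => simp
  | cons a l ih => simp [List.flatMap_cons, List.filter_append, ih]

lemma sum_map_ite {α : Type*} (l : List α) (p : α → Bool) :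
    (l.map (fun a => if p a then 1 else 0)).sum = (l.filter p).length := by
  induction l with
  | nil => simp
  | cons a l ih => by_cases h : p a <;> simp [List.filter_cons, h, ih, Nat.add_comm]

lemma cnt_succ_split (n k : ℕ) :
    cnt (n+1) k
      = ((lists n).filter (fun w => ballotB (w ++ [false]) && ((w ++ [false]).count true == k))).length
      + ((lists n).filter (fun w => ballotB (w ++ [true]) && ((w ++ [true]).count true == k))).length := by
  rw [cnt, lists_succ, length_filter_flatMap]
  have : ∀ w : List Bool,
      (([w ++ [false], w ++ [true]]).filter (fun w => ballotB w && (w.count true == k))).length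
      = (if (ballotB (w ++ [false]) && ((w ++ [false]).count true == k)) then 1 else 0)
        + (if (ballotB (w ++ [true]) && ((w ++ [true]).count true == k)) then 1 else 0) := by
    intro w
    simp only [List.filter_cons, List.filter_nil]
    split <;> split <;> simp
  simp only [this]
  rw [← sum_map_ite, ← sum_map_ite, ← List.sum_map_add]

lemma count_append_false (w : List Bool) : (w ++ [false]).count true = w.count true := by
  simp [List.count_append]

lemma count_append_true (w : List Bool) : (w ++ [true]).count true = w.count true + 1 := by
  simp [List.count_append]

lemma cnt_of_big {n k : ℕ} (h : n < 2 * k) : cnt n k = 0 := by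
  rw [cnt, List.length_eq_zero_iff, List.filter_eq_nil_iff]
  intro w hw
  simp only [Bool.and_eq_true, beq_iff_eq, ballotB_iff, not_and]
  intro hb hc
  have := ballot_total hb
  rw [mem_lists] at hw
  omega

lemma cnt_succ_zero (n : ℕ) : cnt (n+1) 0 = cnt n 0 := by
  rw [cnt_succ_split]
  have h2 : ((lists n).filter (fun w => ballotB (w ++ [true]) && ((w ++ [true]).count true == 0))).length = 0 := by
    rw [List.length_eq_zero_iff, List.filter_eq_nil_iff]
    intro w hw
    simp [count_append_true]
  rw [h2, add_zero, cnt]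
  congr 1
  apply List.filter_congr
  intro w hw
  rw [mem_lists] at hw
  rw [Bool.eq_iff_iff, Bool.and_eq_true, Bool.and_eq_true, beq_iff_eq, beq_iff_eq,
    ballotB_iff, ballotB_iff, ballot_append, count_append_false]
  constructor
  · rintro ⟨⟨h1, _⟩, h3⟩; exact ⟨h1, h3⟩
  · rintro ⟨h1, h3⟩; exact ⟨⟨h1, by have := ballot_total h1; omega⟩, h3⟩

lemma cnt_succ_succ {n k : ℕ} (h : 2 * (k+1) ≤ n+1) :
    cnt (n+1) (k+1) = cnt n (k+1) + cnt n k := by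
  rw [cnt_succ_split]
  congr 1
  · rw [cnt]; congr 1
    apply List.filter_congr
    intro w hw
    rw [mem_lists] at hw
    rw [Bool.eq_iff_iff, Bool.and_eq_true, Bool.and_eq_true, beq_iff_eq, beq_iff_eq,
      ballotB_iff, ballotB_iff, ballot_append, count_append_false]
    constructor
    · rintro ⟨⟨h1, _⟩, h3⟩; exact ⟨h1, h3⟩
    · rintro ⟨h1, h3⟩; exact ⟨⟨h1, by have := ballot_total h1; omega⟩, h3⟩
  · rw [cnt]; congr 1
    apply List.filter_congr
    intro w hw
    rw [mem_lists] at hw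
    rw [Bool.eq_iff_iff, Bool.and_eq_true, Bool.and_eq_true, beq_iff_eq, beq_iff_eq,
      ballotB_iff, ballotB_iff, ballot_append, count_append_true]
    constructor
    · rintro ⟨⟨h1, _⟩, h3⟩; exact ⟨h1, by omega⟩
    · rintro ⟨h1, h3⟩; exact ⟨⟨h1, by omega⟩, by omega⟩

lemma cnt_zero_zero : cnt 0 0 = 1 := by
  rw [cnt, lists_zero]
  have : ballotB ([] : List Bool) = true := ballotB_iff.mpr ballot_nil
  simp [this]

lemma cnt_zero_left (n : ℕ) : cnt n 0 = 1 := by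
  induction n with
  | zero => exact cnt_zero_zero
  | succ n ih => rw [cnt_succ_zero, ih]

def g (n k : ℕ) : ℤ :=
  (n.choose k : ℤ) - (match k with | 0 => 0 | k' + 1 => (n.choose k' : ℤ))

lemma g_zero (n : ℕ) : g n 0 = 1 := by simp [g]

lemma g_succ (n k : ℕ) : g n (k+1) = (n.choose (k+1) : ℤ) - n.choose k := rfl

lemma pascal_succ (n k : ℕ) :
    (((n+1)).choose (k+1) : ℤ) = n.choose (k+1) + n.choose k := by
  rw [Nat.choose_succ_succ]; push_cast; ring

lemma cnt_eq_g : ∀ n k, 2 * k ≤ n → (cnt n k : ℤ) = g n k := by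
  intro n
  induction n with
  | zero =>
    intro k hk
    have : k = 0 := by omega
    subst this
    simp [cnt_zero_zero, g_zero]
  | succ n ih =>
    intro k hk
    cases k with
    | zero => simp [cnt_zero_left, g_zero]
    | succ k' =>
      rw [cnt_succ_succ hk]
      have hk' : 2 * k' ≤ n := by omega
      have h1 : (cnt n (k'+1) : ℤ) = g n (k'+1) := by
        rcases le_or_gt (2*(k'+1)) n with h | h
        · exact ih _ h
        · have hn : n = 2 * k' + 1 := by omega
          rw [cnt_of_big h, g_succ]
          have : n.choose (k'+1) = n.choose k' := by
            subst hn
            have := Nat.choose_symm (n := 2*k'+1) (k := k') (by omega)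
            simpa [show 2*k'+1-k' = k'+1 by omega] using this
          simp [this]
      push_cast
      rw [h1, ih _ hk', g_succ, g_succ, pascal_succ]
      cases k' with
      | zero => rw [g_zero]; simp [Nat.choose_zero_right]
      | succ k'' => rw [g_succ, pascal_succ]; ring



lemma length_filter_partition {α : Type*} (l : List α) (q : α → Bool) (f : α → ℕ) (B : ℕ)
    (hB : ∀ a ∈ l, q a = true → f a < B) :
    (l.filter q).length = ∑ k ∈ Finset.range B, (l.filter (fun a => q a && (f a == k))).length := by
  induction l with
  | nil => simp
  | cons a l ih =>
    have hB' : ∀ x ∈ l, q x = true → f x < B := fun x hx => hB x (List.mem_cons_of_mem _ hx)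
    have hterm : ∀ k, ((a :: l).filter (fun x => q x && (f x == k))).length
        = (if (q a && (f a == k)) then 1 else 0) + (l.filter (fun x => q x && (f x == k))).length := by
      intro k; rw [List.filter_cons]; split <;> simp [Nat.add_comm]
    simp only [hterm]
    rw [Finset.sum_add_distrib, ← ih hB']
    have hsum : (∑ k ∈ Finset.range B, if (q a && (f a == k)) then 1 else 0)
        = if q a then 1 else 0 := by
      by_cases hq : q a
      · simp only [hq, Bool.true_and, if_pos]
        rw [Finset.sum_eq_single (f a)]
        · simp
        · intro b _ hb
          simp only [ite_eq_right_iff]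
          intro hfb
          exact absurd (beq_iff_eq.mp hfb).symm hb
        · intro h
          exact absurd (Finset.mem_range.mpr (hB a List.mem_cons_self hq)) h
      · simp [hq]
    rw [hsum, List.filter_cons]
    by_cases hq : q a <;> simp [hq, Nat.add_comm]

lemma sum_g (M : ℕ) : ∀ t, (∑ k ∈ Finset.range (t+1), if Even k then g (M+1) k else 0)
    = if Even t then (M.choose t : ℤ) else (M.choose (t-1) : ℤ) := by
  intro t
  induction t with
  | zero => simp [g_zero]
  | succ t ih =>
    rw [Finset.sum_range_succ, ih]
    by_cases ht : Even t
    · have h1 : ¬ Even (t+1) := by simp [Nat.even_add_one, ht]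
      simp [ht, h1]
    · have he : Even (t+1) := Nat.even_add_one.mpr ht
      have ht1 : 1 ≤ t := by
        rcases Nat.eq_zero_or_pos t with rfl | h
        · exact absurd (by simp : Even 0) ht
        · exact h
      rw [if_neg ht, if_pos he, if_pos he, g_succ, pascal_succ M t]
      have h2 : ((M+1).choose t : ℤ) = M.choose t + M.choose (t-1) := by
        obtain ⟨t', rfl⟩ : ∃ t', t = t'+1 := ⟨t-1, by omega⟩
        rw [pascal_succ]; simp
      rw [h2]
      ring

lemma En_eq (m : ℕ) :
    ((lists (2*m)).filter (fun w => ballotB w && decide (Even (w.count true)))).length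
      = Nat.choose (2*m - 1) m := by
  rcases Nat.eq_zero_or_pos m with rfl | hm
  · simp [lists_zero]
    rw [List.filter_cons]
    have : ballotB ([] : List Bool) = true := ballotB_iff.mpr ballot_nil
    simp [this]
  have hpart := length_filter_partition (lists (2*m))
      (fun w => ballotB w && decide (Even (w.count true))) (fun w => w.count true) (2*m+1)
      (by
        intro w hw _
        have := mem_lists.mp hw
        have hc := w.count_le_length (a := true)
        show w.count true < 2*m+1
        omega)
  rw [hpart]
  have hterm : ∀ k, ((lists (2*m)).filter
        (fun a => (ballotB a && decide (Even (a.count true))) && (a.count true == k))).length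
      = if Even k then cnt (2*m) k else 0 := by
    intro k
    by_cases hk : Even k
    · rw [if_pos hk, cnt]
      congr 1
      apply List.filter_congr
      intro w _
      rw [Bool.eq_iff_iff]
      simp only [Bool.and_eq_true, beq_iff_eq, decide_eq_true_eq]
      constructor
      · rintro ⟨⟨h1, _⟩, h3⟩; exact ⟨h1, h3⟩
      · rintro ⟨h1, h3⟩; exact ⟨⟨h1, h3 ▸ hk⟩, h3⟩
    · rw [if_neg hk]
      rw [List.length_eq_zero_iff, List.filter_eq_nil_iff]
      intro w _
      simp only [Bool.and_eq_true, beq_iff_eq, decide_eq_true_eq, not_and]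
      rintro ⟨_, h2⟩ h3
      exact hk (h3 ▸ h2)
  simp only [hterm]
  have hsplit : ∑ k ∈ Finset.range (2*m+1), (if Even k then cnt (2*m) k else 0)
      = ∑ k ∈ Finset.range (m+1), (if Even k then cnt (2*m) k else 0) := by
    rw [Finset.range_eq_Ico,
      ← Finset.sum_Ico_consecutive _ (by omega : 0 ≤ m+1) (by omega : m+1 ≤ 2*m+1)]
    have : ∑ k ∈ Finset.Ico (m+1) (2*m+1), (if Even k then cnt (2*m) k else 0) = 0 := by
      apply Finset.sum_eq_zero
      intro k hk
      rw [Finset.mem_Ico] at hk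
      rw [cnt_of_big (by omega)]
      simp
    rw [this, add_zero, Finset.range_eq_Ico]
  rw [hsplit]
  -- move to ℤ
  have hZ : ((∑ k ∈ Finset.range (m+1), (if Even k then cnt (2*m) k else 0) : ℕ) : ℤ)
      = ((2*m-1).choose m : ℤ) := by
    push_cast
    have : ∀ k ∈ Finset.range (m+1), ((if Even k then (cnt (2*m) k : ℤ) else 0))
        = (if Even k then g (2*m) k else 0) := by
      intro k hk
      rw [Finset.mem_range] at hk
      by_cases h : Even k
      · rw [if_pos h, if_pos h, cnt_eq_g _ _ (by omega)]
      · rw [if_neg h, if_neg h]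
    rw [Finset.sum_congr rfl this]
    have hsg := sum_g (2*m-1) m
    rw [show (2*m-1)+1 = 2*m by omega] at hsg
    rw [hsg]
    by_cases hm2 : Even m
    · rw [if_pos hm2]
    · rw [if_neg hm2]
      have := Nat.choose_symm (n := 2*m-1) (k := m) (by omega)
      have heq : 2*m-1-m = m-1 := by omega
      rw [heq] at this
      rw [this]
  exact_mod_cast hZ



def colsAux : List Bool → ℕ → List ℕ × List ℕ
  | [], _ => ([], [])
  | b :: w, v =>
    let p := colsAux w (v+1)
    if b then (p.1, v :: p.2) else (v :: p.1, p.2)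

lemma colsAux_nil (v : ℕ) : colsAux [] v = ([], []) := rfl

lemma colsAux_cons (b : Bool) (w : List Bool) (v : ℕ) :
    colsAux (b :: w) v = if b then ((colsAux w (v+1)).1, v :: (colsAux w (v+1)).2)
      else (v :: (colsAux w (v+1)).1, (colsAux w (v+1)).2) := by
  cases b <;> simp [colsAux]

lemma colsAux_ge : ∀ (w : List Bool) (v : ℕ),
    (∀ x ∈ (colsAux w v).1, v ≤ x) ∧ (∀ x ∈ (colsAux w v).2, v ≤ x) := by
  intro w
  induction w with
  | nil => intro v; simp [colsAux_nil]
  | cons b w ih =>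
    intro v
    have h := ih (v+1)
    rw [colsAux_cons]
    cases b
    · simp only [Bool.false_eq_true, if_false]
      constructor
      · intro x hx
        rcases List.mem_cons.mp hx with rfl | hx
        · omega
        · have := h.1 x hx; omega
      · intro x hx; have := h.2 x hx; omega
    · simp only [if_true]
      constructor
      · intro x hx; have := h.1 x hx; omega
      · intro x hx
        rcases List.mem_cons.mp hx with rfl | hx
        · omega
        · have := h.2 x hx; omega

lemma colsAux_length (w : List Bool) (v : ℕ) :
    (colsAux w v).1.length = w.count false ∧ (colsAux w v).2.length = w.count true := by
  induction w generalizing v with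
  | nil => simp [colsAux_nil]
  | cons b w ih =>
    rw [colsAux_cons]
    cases b <;> simp [List.count_cons, (ih (v+1)).1, (ih (v+1)).2]

lemma colsAux_sorted (w : List Bool) (v : ℕ) :
    (colsAux w v).1.Pairwise (· < ·) ∧ (colsAux w v).2.Pairwise (· < ·) := by
  induction w generalizing v with
  | nil => simp [colsAux_nil]
  | cons b w ih =>
    rw [colsAux_cons]
    have h1 := (ih (v+1)).1
    have h2 := (ih (v+1)).2
    have hg := colsAux_ge w (v+1)
    cases b
    · simp only [Bool.false_eq_true, if_false]
      exact ⟨List.Pairwise.cons (fun x hx => by have := hg.1 x hx; omega) h1, h2⟩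
    · simp only [if_true]
      exact ⟨h1, List.Pairwise.cons (fun x hx => by have := hg.2 x hx; omega) h2⟩

lemma colsAux_perm (w : List Bool) (v : ℕ) :
    ((colsAux w v).1 ++ (colsAux w v).2).Perm (List.range' v w.length) := by
  induction w generalizing v with
  | nil => simp [colsAux_nil]
  | cons b w ih =>
    have h := ih (v+1)
    rw [colsAux_cons, List.length_cons, List.range'_succ]
    cases b
    · simp only [Bool.false_eq_true, if_false]
      rw [List.cons_append]
      exact h.cons v
    · simp only [if_true]
      exact List.perm_middle.trans (h.cons v)

lemma colsAux_countP (w : List Bool) (v : ℕ) (i : ℕ) :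
    (colsAux w v).2.countP (fun u => decide (u < v + i)) = (w.take i).count true := by
  induction w generalizing v i with
  | nil => simp [colsAux_nil]
  | cons b w ih =>
    cases i with
    | zero =>
      simp only [List.take_zero, List.count_nil, Nat.add_zero]
      rw [List.countP_eq_zero]
      intro x hx
      have := (colsAux_ge (b :: w) v).2 x hx
      simp only [decide_eq_true_eq]
      omega
    | succ i =>
      rw [colsAux_cons]
      have key : ∀ u ∈ (colsAux w (v+1)).2,
          (decide (u < v + (i+1)) = true ↔ decide (u < (v+1) + i) = true) := by
        intro u _; simp only [decide_eq_true_eq]; omega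
      cases b
      · simp only [Bool.false_eq_true, if_false]
        rw [List.countP_congr key, ih]
        simp [List.count_cons]
      · simp only [if_true]
        rw [List.countP_cons, List.countP_congr key, ih]
        simp [List.count_cons, List.take_succ_cons]

lemma colsAux_recover (w : List Bool) (v : ℕ) :
    w = (List.range' v w.length).map (fun u => decide (u ∈ (colsAux w v).2)) := by
  induction w generalizing v with
  | nil => simp
  | cons b w ih =>
    rw [List.length_cons, List.range'_succ, List.map_cons, colsAux_cons]
    have hg := (colsAux_ge w (v+1)).2
    have hv : v ∉ (colsAux w (v+1)).2 := fun h => by have := hg v h; omega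
    cases b
    · simp only [Bool.false_eq_true, if_false]
      congr 1
      · simp [hv]
      · conv_lhs => rw [ih (v+1)]
    · simp only [if_true]
      congr 1
      · simp
      · conv_lhs => rw [ih (v+1)]
        apply List.map_congr_left
        intro u hu
        have h1 : v + 1 ≤ u := (List.mem_range'_1.mp hu).1
        rw [decide_eq_decide]
        constructor
        · exact fun h => List.mem_cons_of_mem _ h
        · intro h
          rcases List.mem_cons.mp h with rfl | h
          · omega
          · exact h

lemma sorted_getD_iff {l : List ℕ} (hl : l.Pairwise (· < ·)) {p : ℕ → Bool}
    (hp : ∀ a b : ℕ, a ≤ b → p b = true → p a = true) :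
    ∀ {k : ℕ}, k < l.length → (p (l.getD k 0) = true ↔ k < l.countP p) := by
  induction l with
  | nil => intro k hk; simp at hk
  | cons a l ih =>
    intro k hk
    rw [List.pairwise_cons] at hl
    obtain ⟨ha, hl'⟩ := hl
    cases k with
    | zero =>
      simp only [List.getD_cons_zero, List.countP_cons]
      constructor
      · intro h; simp [h]
      · intro h
        by_contra hpa
        rw [Bool.not_eq_true] at hpa
        rw [hpa] at h
        simp only [Bool.false_eq_true, if_false, Nat.add_zero] at h
        obtain ⟨x, hx, hpx⟩ := List.countP_pos_iff.mp h  -- maybe countP_pos direction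
        exact absurd (hp a x (le_of_lt (ha x hx)) hpx) (by simp [hpa])
    | succ k =>
      simp only [List.getD_cons_succ, List.countP_cons]
      have hk' : k < l.length := by simpa using hk
      cases hpa : p a with
      | true =>
        rw [ih hl' hk']
        simp
      | false =>
        have hz : l.countP p = 0 := by
          rw [List.countP_eq_zero]
          intro x hx
          intro hpx
          exact absurd (hp a x (le_of_lt (ha x hx)) hpx) (by simp [hpa])
        have hmem : l.getD k 0 ∈ l := by
          rw [List.getD_eq_getElem l 0 hk']
          exact List.getElem_mem _
        have hfalse : p (l.getD k 0) = false := by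
          by_contra h
          rw [Bool.not_eq_false] at h
          have := List.countP_pos_iff.mpr ⟨_, hmem, h⟩
          omega
        rw [hfalse, hz]
        simp

lemma countP_range' (n : ℕ) : ∀ (v i : ℕ),
    (List.range' v n).countP (fun u => decide (u < v + i)) = min i n := by
  induction n with
  | zero => simp
  | succ n ih =>
    intro v i
    rw [List.range'_succ, List.countP_cons]
    cases i with
    | zero =>
      have : (List.range' (v+1) n).countP (fun u => decide (u < v + 0)) = 0 := by
        rw [List.countP_eq_zero]
        intro x hx
        have := (List.mem_range'_1.mp hx).1
        simp only [decide_eq_true_eq]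
        omega
      rw [this]
      simp
    | succ i =>
      have hc : (List.range' (v+1) n).countP (fun u => decide (u < v + (i+1)))
          = (List.range' (v+1) n).countP (fun u => decide (u < (v+1) + i)) := by
        apply List.countP_congr
        intro u _
        simp only [decide_eq_true_eq]
        omega
      rw [hc, ih]
      simp only [decide_eq_true_eq]
      rw [if_pos (by omega)]
      omega



lemma cols_sum_countP (w : List Bool) (i : ℕ) :
    (colsAux w 1).1.countP (fun u => decide (u < 1 + i))
      + (colsAux w 1).2.countP (fun u => decide (u < 1 + i)) = min i w.length := by
  rw [← List.countP_append, (colsAux_perm w 1).countP_eq, countP_range']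

lemma hp_down (i : ℕ) : ∀ a b : ℕ, a ≤ b → decide (b < 1 + i) = true → decide (a < 1 + i) = true := by
  intro a b hab h
  simp only [decide_eq_true_eq] at *
  omega

lemma ballot_cols_mp {w : List Bool} (hw : ballot w) :
    ∀ k, k < (colsAux w 1).2.length →
      (colsAux w 1).1.getD k 0 < (colsAux w 1).2.getD k 0 := by
  obtain ⟨c1, c2, hc⟩ : ∃ c1 c2, colsAux w 1 = (c1, c2) := ⟨_, _, rfl⟩
  rw [hc]
  intro k hk
  simp only at hk ⊢
  have hsort1 : c1.Pairwise (· < ·) := by have := (colsAux_sorted w 1).1; rw [hc] at this; exact this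
  have hsort2 : c2.Pairwise (· < ·) := by have := (colsAux_sorted w 1).2; rw [hc] at this; exact this
  have hperm : (c1 ++ c2).Perm (List.range' 1 w.length) := by
    have := colsAux_perm w 1; rw [hc] at this; exact this
  set u := c2.getD k 0 with hu
  have hmem : u ∈ c2 := by
    rw [hu, List.getD_eq_getElem c2 0 hk]
    exact List.getElem_mem _
  have h2 : k < c2.countP (fun x => decide (x < 1 + u)) := by
    rw [← sorted_getD_iff hsort2 (hp_down u) hk]
    simp only [decide_eq_true_eq]
    omega
  have hcount : c2.countP (fun x => decide (x < 1 + u)) = (w.take u).count true := by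
    have := colsAux_countP w 1 u; rw [hc] at this; exact this
  have hun : u ≤ w.length := by
    have h := (hperm.mem_iff).mp (List.mem_append_right c1 hmem)
    have := (List.mem_range'_1.mp h).2
    omega
  have hbal := hw u
  have hsum : c1.countP (fun x => decide (x < 1 + u)) + c2.countP (fun x => decide (x < 1 + u))
      = min u w.length := by
    rw [← List.countP_append, hperm.countP_eq, countP_range']
  have h3 : k < c1.countP (fun x => decide (x < 1 + u)) := by omega
  have hklen : k < c1.length := lt_of_lt_of_le h3 List.countP_le_length
  have h4 := (sorted_getD_iff hsort1 (hp_down u) hklen).mpr h3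
  simp only [decide_eq_true_eq] at h4
  have hne : c1.getD k 0 ≠ u := by
    intro heq
    have hmem1 : c1.getD k 0 ∈ c1 := by
      rw [List.getD_eq_getElem c1 0 hklen]
      exact List.getElem_mem _
    have hnd : (c1 ++ c2).Nodup := hperm.nodup_iff.mpr (List.nodup_range' _)
    have hdisj := (List.nodup_append.mp hnd).2.2
    exact hdisj _ hmem1 _ hmem heq
  omega

lemma ballot_cols_mpr {w : List Bool}
    (hlen : (colsAux w 1).2.length ≤ (colsAux w 1).1.length)
    (h : ∀ k, k < (colsAux w 1).2.length →
      (colsAux w 1).1.getD k 0 < (colsAux w 1).2.getD k 0) :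
    ballot w := by
  obtain ⟨c1, c2, hc⟩ : ∃ c1 c2, colsAux w 1 = (c1, c2) := ⟨_, _, rfl⟩
  rw [hc] at hlen h
  simp only at hlen h
  intro i
  have hsort1 : c1.Pairwise (· < ·) := by have := (colsAux_sorted w 1).1; rw [hc] at this; exact this
  have hsort2 : c2.Pairwise (· < ·) := by have := (colsAux_sorted w 1).2; rw [hc] at this; exact this
  have hperm : (c1 ++ c2).Perm (List.range' 1 w.length) := by
    have := colsAux_perm w 1; rw [hc] at this; exact this
  have hcount : c2.countP (fun x => decide (x < 1 + i)) = (w.take i).count true := by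
    have := colsAux_countP w 1 i; rw [hc] at this; exact this
  set t := c2.countP (fun x => decide (x < 1 + i)) with ht
  rcases Nat.eq_zero_or_pos t with h0 | hpos
  · omega
  have hk2 : t - 1 < c2.length := by
    have := List.countP_le_length (p := fun x => decide (x < 1 + i)) (l := c2)
    omega
  have h1 := (sorted_getD_iff hsort2 (hp_down i) hk2).mpr (by omega)
  simp only [decide_eq_true_eq] at h1
  have h2 := h (t-1) hk2
  have hklen : t - 1 < c1.length := lt_of_lt_of_le hk2 hlen
  have h3 : t - 1 < c1.countP (fun x => decide (x < 1 + i)) := by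
    rw [← sorted_getD_iff hsort1 (hp_down i) hklen]
    simp only [decide_eq_true_eq]
    omega
  have hsum : c1.countP (fun x => decide (x < 1 + i)) + c2.countP (fun x => decide (x < 1 + i))
      = min i w.length := by
    rw [← List.countP_append, hperm.countP_eq, countP_range']
  omega

lemma colsAux_reconstruct : ∀ (n v : ℕ) (l1 l2 : List ℕ), l1.Pairwise (· < ·) → l2.Pairwise (· < ·) →
    (l1 ++ l2).Perm (List.range' v n) →
    colsAux ((List.range' v n).map (fun u => decide (u ∈ l2))) v = (l1, l2) := by
  intro n
  induction n with
  | zero =>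
    intro v l1 l2 _ _ hperm
    have := List.Perm.eq_nil hperm
    have h1 : l1 = [] := by
      cases l1 <;> simp_all
    have h2 : l2 = [] := by
      cases l2 <;> simp_all
    subst h1; subst h2
    simp [colsAux_nil]
  | succ n ih =>
    intro v l1 l2 hs1 hs2 hperm
    rw [List.range'_succ, List.map_cons, colsAux_cons]
    have hnd : (l1 ++ l2).Nodup := hperm.nodup_iff.mpr (List.nodup_range' _)
    have hdisj := (List.nodup_append.mp hnd).2.2
    have hvmem : v ∈ l1 ++ l2 := hperm.mem_iff.mpr (by rw [List.range'_succ]; exact List.mem_cons_self)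
    have hge : ∀ x ∈ l1 ++ l2, v ≤ x := by
      intro x hx
      have := hperm.mem_iff.mp hx
      exact (List.mem_range'_1.mp this).1
    rcases List.mem_append.mp hvmem with hv1 | hv2
    · -- v ∈ l1, head of l1
      have hvn2 : v ∉ l2 := fun h => hdisj _ hv1 _ h rfl
      obtain ⟨l1', rfl⟩ : ∃ l1', l1 = v :: l1' := by
        cases l1 with
        | nil => simp at hv1
        | cons c l1' =>
          have hc : c = v := by
            rcases List.mem_cons.mp hv1 with h | h
            · omega
            · have h1 := (List.pairwise_cons.mp hs1).1 v h
              have h2 := hge c (by simp)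
              omega
          exact ⟨l1', by rw [hc]⟩
      rw [if_neg (by simp [hvn2])]
      have hperm' : (l1' ++ l2).Perm (List.range' (v+1) n) := by
        have : ((v :: l1') ++ l2) = v :: (l1' ++ l2) := rfl
        rw [this, List.range'_succ] at hperm
        exact hperm.cons_inv
      rw [ih (v+1) l1' l2 (List.pairwise_cons.mp hs1).2 hs2 hperm']
    · -- v ∈ l2
      have hvn1 : v ∉ l1 := fun h => hdisj _ h _ hv2 rfl
      obtain ⟨l2', rfl⟩ : ∃ l2', l2 = v :: l2' := by
        cases l2 with
        | nil => simp at hv2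
        | cons c l2' =>
          have hc : c = v := by
            rcases List.mem_cons.mp hv2 with h | h
            · omega
            · have h1 := (List.pairwise_cons.mp hs2).1 v h
              have h2 := hge c (by simp [List.mem_append])
              omega
          exact ⟨l2', by rw [hc]⟩
      rw [if_pos (by simp)]
      have hperm' : (l1 ++ l2').Perm (List.range' (v+1) n) := by
        rw [List.range'_succ] at hperm
        exact (List.perm_middle.symm.trans hperm).cons_inv
      have hmap : (List.range' (v+1) n).map (fun u => decide (u ∈ v :: l2'))
          = (List.range' (v+1) n).map (fun u => decide (u ∈ l2')) := by
        apply List.map_congr_left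
        intro u hu
        have h1 : v + 1 ≤ u := (List.mem_range'_1.mp hu).1
        rw [decide_eq_decide]
        constructor
        · intro h
          rcases List.mem_cons.mp h with rfl | h
          · omega
          · exact h
        · exact fun h => List.mem_cons_of_mem _ h
      rw [hmap, ih (v+1) l1 l2' hs1 (List.pairwise_cons.mp hs2).2 hperm']




def tab2 (c1 c2 : List ℕ) : List (List ℕ) :=
  List.zipWith (fun a b => [a, b]) c1 c2 ++ (c1.drop c2.length).map (fun a => [a])

lemma tab2_length {c1 c2 : List ℕ} (h : c2.length ≤ c1.length) :
    (tab2 c1 c2).length = c1.length := by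
  simp [tab2]
  omega

lemma tab2_getD_lo {c1 c2 : List ℕ} (h : c2.length ≤ c1.length) {i : ℕ} (hi : i < c2.length) :
    (tab2 c1 c2).getD i [] = [c1.getD i 0, c2.getD i 0] := by
  rw [List.getD_eq_getElem _ _ (by rw [tab2_length h]; omega)]
  simp only [tab2]
  rw [List.getElem_append_left (by simp; omega), List.getElem_zipWith]
  rw [List.getD_eq_getElem _ _ (by omega), List.getD_eq_getElem _ _ (by omega)]

lemma tab2_getD_mid {c1 c2 : List ℕ} (h : c2.length ≤ c1.length) {i : ℕ}
    (h1 : c2.length ≤ i) (h2 : i < c1.length) :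
    (tab2 c1 c2).getD i [] = [c1.getD i 0] := by
  rw [List.getD_eq_getElem _ _ (by rw [tab2_length h]; omega)]
  simp only [tab2]
  rw [List.getElem_append_right (by simp; omega)]
  simp only [List.getElem_map, List.getElem_drop]
  rw [List.getD_eq_getElem _ _ (by omega)]
  congr 2
  simp
  omega

lemma tab2_getD_hi {c1 c2 : List ℕ} (h : c2.length ≤ c1.length) {i : ℕ} (hi : c1.length ≤ i) :
    (tab2 c1 c2).getD i [] = [] := by
  apply List.getD_eq_default
  rw [tab2_length h]
  omega

lemma tab2_shape {c1 c2 : List ℕ} (h : c2.length ≤ c1.length) :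
    (tab2 c1 c2).map List.length
      = List.replicate c2.length 2 ++ List.replicate (c1.length - c2.length) 1 := by
  rw [tab2, List.map_append]
  congr 1
  · have : ∀ (c1 c2 : List ℕ), c2.length ≤ c1.length →
        (List.zipWith (fun a b => [a, b]) c1 c2).map List.length = List.replicate c2.length 2 := by
      intro c1
      induction c1 with
      | nil =>
        intro c2 hc
        have : c2 = [] := List.length_eq_zero_iff.mp (by simpa using hc)
        subst this; simp
      | cons a c1 ih =>
        intro c2 hc
        cases c2 with
        | nil => simp
        | cons b c2 => simp [List.replicate_succ, ih c2 (by simpa using hc)]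
    exact this c1 c2 h
  · rw [List.map_map]
    have : ∀ l : List ℕ, (l.map (List.length ∘ fun a => [a])) = List.replicate l.length 1 := by
      intro l
      induction l with
      | nil => simp
      | cons a l ih => simp [List.replicate_succ, ih]
    rw [this]
    simp [h]

lemma flatten_zip_perm : ∀ (c1 c2 : List ℕ), c2.length ≤ c1.length →
    ((List.zipWith (fun a b => [a, b]) c1 c2).flatten).Perm (c1.take c2.length ++ c2) := by
  intro c1
  induction c1 with
  | nil =>
    intro c2 hc
    have : c2 = [] := List.length_eq_zero_iff.mp (by simpa using hc)
    subst this; simp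
  | cons a c1 ih =>
    intro c2 hc
    cases c2 with
    | nil => simp
    | cons b c2 =>
      simp only [List.zipWith_cons_cons, List.flatten_cons, List.length_cons, List.take_succ_cons]
      have h := ih c2 (by simpa using hc)
      have s1 : (a :: b :: (List.zipWith (fun a b => [a, b]) c1 c2).flatten).Perm
          (a :: b :: (c1.take c2.length ++ c2)) := ((h.cons b).cons a)
      have s2 : (b :: (c1.take c2.length ++ c2)).Perm (c1.take c2.length ++ b :: c2) :=
        List.perm_middle.symm
      exact s1.trans (s2.cons a)

lemma flatten_map_singleton (l : List ℕ) : ((l.map (fun a => [a])).flatten) = l := by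
  induction l with
  | nil => simp
  | cons a l ih => simp [ih]

lemma tab2_flatten_perm {c1 c2 : List ℕ} (h : c2.length ≤ c1.length) :
    ((tab2 c1 c2).flatten).Perm (c1 ++ c2) := by
  rw [tab2, List.flatten_append, flatten_map_singleton]
  have s1 : ((List.zipWith (fun a b => [a, b]) c1 c2).flatten ++ c1.drop c2.length).Perm
      ((c1.take c2.length ++ c2) ++ c1.drop c2.length) :=
    (flatten_zip_perm c1 c2 h).append_right _
  have s2 : ((c1.take c2.length ++ c2) ++ c1.drop c2.length).Perm
      ((c1.take c2.length ++ c1.drop c2.length) ++ c2) := by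
    rw [List.append_assoc, List.append_assoc]
    exact (List.perm_append_comm).append_left _
  have := (s1.trans s2)
  rwa [List.take_append_drop] at this

lemma tab2_proj1 {c1 c2 : List ℕ} (h : c2.length ≤ c1.length) :
    (tab2 c1 c2).filterMap (fun r => r[0]?) = c1 := by
  rw [tab2, List.filterMap_append]
  have h1 : ∀ (c1 c2 : List ℕ), (List.zipWith (fun a b => [a, b]) c1 c2).filterMap (fun r => r[0]?)
      = c1.take c2.length := by
    intro c1
    induction c1 with
    | nil => intro c2; simp
    | cons a c1 ih =>
      intro c2
      cases c2 with
      | nil => simp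
      | cons b c2 => simp [List.filterMap_cons, ih]
  have h2 : ∀ l : List ℕ, (l.map (fun a => [a])).filterMap (fun r => r[0]?) = l := by
    intro l
    induction l with
    | nil => simp
    | cons a l ih => simp [List.filterMap_cons, ih]
  rw [h1, h2, List.take_append_drop]

lemma tab2_proj2 {c1 c2 : List ℕ} (h : c2.length ≤ c1.length) :
    (tab2 c1 c2).filterMap (fun r => r[1]?) = c2 := by
  rw [tab2, List.filterMap_append]
  have h1 : ∀ (c1 c2 : List ℕ), c2.length ≤ c1.length →
      (List.zipWith (fun a b => [a, b]) c1 c2).filterMap (fun r => r[1]?) = c2 := by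
    intro c1
    induction c1 with
    | nil =>
        intro c2 hc
        have : c2 = [] := List.length_eq_zero_iff.mp (by simpa using hc)
        subst this; simp
    | cons a c1 ih =>
      intro c2 hc
      cases c2 with
      | nil => simp
      | cons b c2 => simp [List.filterMap_cons, ih c2 (by simpa using hc)]
  have h2 : ∀ l : List ℕ, (l.map (fun a => [a])).filterMap (fun r => r[1]?) = [] := by
    intro l
    induction l with
    | nil => simp
    | cons a l ih => simp [List.filterMap_cons, ih]
  rw [h1 _ _ h, h2, List.append_nil]



def tab (w : List Bool) : List (List ℕ) := tab2 (colsAux w 1).1 (colsAux w 1).2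

-- small helpers
lemma count_true_add_count_false (w : List Bool) : w.count true + w.count false = w.length := by
  induction w with
  | nil => simp
  | cons b w ih => cases b <;> simp [List.count_cons] <;> omega

lemma pair_get? {x y a j : ℕ} : ([x, y] : List ℕ)[j]? = some a ↔ (j = 0 ∧ a = x) ∨ (j = 1 ∧ a = y) := by
  match j with
  | 0 => simp [eq_comm]
  | 1 => simp [eq_comm]
  | (n+2) => simp

lemma single_get? {x a j : ℕ} : ([x] : List ℕ)[j]? = some a ↔ j = 0 ∧ a = x := by
  match j with
  | 0 => simp [eq_comm]
  | (n+1) => simp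

lemma sorted_getD_lt {l : List ℕ} (hl : l.Pairwise (· < ·)) {i j : ℕ} (hij : i < j)
    (hj : j < l.length) : l.getD i 0 < l.getD j 0 := by
  rw [List.getD_eq_getElem _ _ (lt_trans hij hj), List.getD_eq_getElem _ _ hj]
  exact List.pairwise_iff_getElem.mp hl i j _ _ hij

lemma sorted_of_consec {l : List ℕ} (h : ∀ i, i + 1 < l.length → l.getD i 0 < l.getD (i+1) 0) :
    l.Pairwise (· < ·) := by
  rw [← List.isChain_iff_pairwise]
  apply List.isChain_iff_getElem.mpr
  intro i hi
  have := h i (by omega)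
  rwa [List.getD_eq_getElem _ _ (by omega), List.getD_eq_getElem _ _ (by omega)] at this

lemma list_eq_pair {l : List ℕ} (h : l.length = 2) : l = [l.getD 0 0, l.getD 1 0] := by
  match l with
  | [a, b] => rfl

lemma list_eq_single {l : List ℕ} (h : l.length = 1) : l = [l.getD 0 0] := by
  match l with
  | [a] => rfl

theorem tab_spec {m : ℕ} {w : List Bool} (hw : w.length = 2*m) (hb : ballot w)
    (hev : Even (w.count true)) :
    IsStandard (tab w) (2*m) ∧ ∃ p q : ℕ, 4*p + 2*q = 2*m ∧
      (tab w).map List.length = List.replicate (2*p) 2 ++ List.replicate (2*q) 1 := by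
  obtain ⟨c1, c2, hc⟩ : ∃ c1 c2, colsAux w 1 = (c1, c2) := ⟨_, _, rfl⟩
  have htab : tab w = tab2 c1 c2 := by rw [tab, hc]
  have hlen1 : c1.length = w.count false := by have := (colsAux_length w 1).1; rw [hc] at this; exact this
  have hlen2 : c2.length = w.count true := by have := (colsAux_length w 1).2; rw [hc] at this; exact this
  have hcc := count_true_add_count_false w
  have htot := ballot_total hb
  have hlen : c2.length ≤ c1.length := by omega
  have hs1 : c1.Pairwise (· < ·) := by have := (colsAux_sorted w 1).1; rw [hc] at this; exact this
  have hs2 : c2.Pairwise (· < ·) := by have := (colsAux_sorted w 1).2; rw [hc] at this; exact this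
  have hperm : (c1 ++ c2).Perm (List.range' 1 (2*m)) := by
    have := colsAux_perm w 1; rw [hc, hw] at this; exact this
  have hrow : ∀ k, k < c2.length → c1.getD k 0 < c2.getD k 0 := by
    have := ballot_cols_mp hb; rw [hc] at this; exact this
  have hrows : ∀ r ∈ tab2 c1 c2,
      (∃ i, i < c2.length ∧ r = [c1.getD i 0, c2.getD i 0]) ∨
      (∃ i, c2.length ≤ i ∧ i < c1.length ∧ r = [c1.getD i 0]) := by
    intro r hr
    obtain ⟨i, hi, hieq⟩ := List.mem_iff_getElem.mp hr
    rw [tab2_length hlen] at hi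
    have hgd : (tab2 c1 c2).getD i [] = r := by
      rw [List.getD_eq_getElem _ _ (by rw [tab2_length hlen]; omega)]
      exact hieq
    rcases lt_or_ge i c2.length with h | h
    · left; exact ⟨i, h, by rw [← hgd, tab2_getD_lo hlen h]⟩
    · right; exact ⟨i, h, hi, by rw [← hgd, tab2_getD_mid hlen h hi]⟩
  have hsortrows : ∀ r ∈ tab2 c1 c2, List.Pairwise (· < ·) r := by
    intro r hr
    rcases hrows r hr with ⟨i, hi, rfl⟩ | ⟨i, _, _, rfl⟩
    · have := hrow i hi
      simpa [List.pairwise_cons] using this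
    · simp
  constructor
  · refine ⟨⟨?_, ?_, ?_, ?_⟩, ?_, ?_⟩
    · intro r hr
      rw [htab] at hr
      exact (hsortrows r hr).imp (fun h => le_of_lt h)
    · intro i j a b ha hb'
      rw [htab] at ha hb'
      rcases lt_or_ge (i+1) c2.length with h1 | h1
      · rw [tab2_getD_lo hlen h1] at hb'
        rw [tab2_getD_lo hlen (by omega)] at ha
        rcases pair_get?.mp ha with ⟨rfl, rfl⟩ | ⟨rfl, rfl⟩ <;>
          rcases pair_get?.mp hb' with ⟨hj, rfl⟩ | ⟨hj, rfl⟩ <;>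
          first
          | exact sorted_getD_lt hs1 (by omega) (by omega)
          | exact sorted_getD_lt hs2 (by omega) (by omega)
          | omega
      · rcases lt_or_ge (i+1) c1.length with h2 | h2
        · rw [tab2_getD_mid hlen h1 h2] at hb'
          obtain ⟨rfl, rfl⟩ := single_get?.mp hb'
          rcases lt_or_ge i c2.length with h3 | h3
          · rw [tab2_getD_lo hlen h3] at ha
            rcases pair_get?.mp ha with ⟨_, rfl⟩ | ⟨hj, rfl⟩
            · exact sorted_getD_lt hs1 (by omega) (by omega)
            · omega
          · rw [tab2_getD_mid hlen h3 (by omega)] at ha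
            obtain ⟨_, rfl⟩ := single_get?.mp ha
            exact sorted_getD_lt hs1 (by omega) (by omega)
        · rw [tab2_getD_hi hlen h2] at hb'
          simp at hb'
    · intro i
      rw [htab]
      rcases lt_or_ge (i+1) c2.length with h1 | h1
      · rw [tab2_getD_lo hlen h1, tab2_getD_lo hlen (by omega)]
        simp
      · rcases lt_or_ge (i+1) c1.length with h2 | h2
        · rw [tab2_getD_mid hlen h1 h2]
          rcases lt_or_ge i c2.length with h3 | h3
          · rw [tab2_getD_lo hlen h3]; simp
          · rw [tab2_getD_mid hlen h3 (by omega)]; simp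
        · rw [tab2_getD_hi hlen h2]; simp
    · rw [htab]
      intro hmem
      rcases hrows [] hmem with ⟨i, _, h⟩ | ⟨i, _, _, h⟩ <;> simp at h
    · intro r hr
      rw [htab] at hr
      exact hsortrows r hr
    · rw [htab]
      exact (tab2_flatten_perm hlen).trans hperm
  · obtain ⟨p, hp⟩ := hev
    refine ⟨p, m - 2*p, by omega, ?_⟩
    rw [htab, tab2_shape hlen]
    congr 1
    · congr 1; omega
    · congr 1; omega

theorem tab_inj {n : ℕ} {w w' : List Bool} (h1 : w.length = n) (h2 : w'.length = n)
    (hb : ballot w) (hb' : ballot w') (htab : tab w = tab w') : w = w' := by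
  have hlen : (colsAux w 1).2.length ≤ (colsAux w 1).1.length := by
    have ha := (colsAux_length w 1).1
    have hb2 := (colsAux_length w 1).2
    have := ballot_total hb
    have := count_true_add_count_false w
    omega
  have hlen' : (colsAux w' 1).2.length ≤ (colsAux w' 1).1.length := by
    have ha := (colsAux_length w' 1).1
    have hb2 := (colsAux_length w' 1).2
    have := ballot_total hb'
    have := count_true_add_count_false w'
    omega
  have hc2 : (colsAux w 1).2 = (colsAux w' 1).2 := by
    rw [← tab2_proj2 hlen, ← tab2_proj2 hlen', ← tab, ← tab, htab]
  rw [colsAux_recover w 1, colsAux_recover w' 1, h1, h2, hc2]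

theorem tab_surj {m : ℕ} {T : List (List ℕ)} (hT : IsStandard T (2*m)) (p q : ℕ)
    (hpq : 4*p + 2*q = 2*m)
    (hshape : T.map List.length = List.replicate (2*p) 2 ++ List.replicate (2*q) 1) :
    ∃ w : List Bool, w.length = 2*m ∧ ballot w ∧ Even (w.count true) ∧ tab w = T := by
  obtain ⟨⟨hle, hcol, hdec, hnil⟩, hrowsort, hflat⟩ := hT
  have hTlen : T.length = 2*p + 2*q := by
    have := congrArg List.length hshape
    simpa using this
  have hrowlen : ∀ i, i < T.length → (T.getD i []).length = if i < 2*p then 2 else 1 := by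
    intro i hi
    have h1 : (T.getD i []).length = (T.map List.length).getD i 0 := by
      rw [List.getD_eq_getElem T [] hi,
        List.getD_eq_getElem (T.map List.length) 0 (by simpa using hi), List.getElem_map]
    rw [hshape] at h1
    have hlen' : i < (List.replicate (2*p) 2 ++ List.replicate (2*q) 1).length := by
      simp; omega
    rw [List.getD_eq_getElem _ 0 hlen'] at h1
    rcases lt_or_ge i (2*p) with h | h
    · rw [List.getElem_append_left (by simpa using h), List.getElem_replicate] at h1
      rw [h1, if_pos h]
    · rw [List.getElem_append_right (by simpa using h), List.getElem_replicate] at h1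
      rw [h1, if_neg (by omega)]
  set d1 := T.map (fun r => r.getD 0 0) with hd1
  set d2 := (T.take (2*p)).map (fun r => r.getD 1 0) with hd2
  have hd1len : d1.length = 2*p + 2*q := by simp [hd1, hTlen]
  have hd2len : d2.length = 2*p := by simp [hd2, hTlen]
  have hdlen : d2.length ≤ d1.length := by omega
  have hd1get : ∀ i, i < T.length → d1.getD i 0 = (T.getD i []).getD 0 0 := by
    intro i hi
    rw [hd1, List.getD_eq_getElem _ _ (by simpa using hi), List.getElem_map,
      List.getD_eq_getElem T [] hi]
  have hd2get : ∀ i, i < 2*p → d2.getD i 0 = (T.getD i []).getD 1 0 := by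
    intro i hi
    have hiT : i < T.length := by omega
    have hlen' : i < ((T.take (2*p)).map (fun r => r.getD 1 0)).length := by
      simp [hTlen]; omega
    rw [hd2, List.getD_eq_getElem _ _ hlen', List.getElem_map, List.getElem_take,
      List.getD_eq_getElem T [] hiT]
  have hrows : ∀ i, i < T.length →
      T.getD i [] = if i < 2*p then [d1.getD i 0, d2.getD i 0] else [d1.getD i 0] := by
    intro i hi
    rcases lt_or_ge i (2*p) with h | h
    · have hl2 := hrowlen i hi
      rw [if_pos h] at hl2
      rw [if_pos h, hd1get i hi, hd2get i h]
      exact list_eq_pair hl2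
    · have hl2 := hrowlen i hi
      rw [if_neg (by omega)] at hl2
      rw [if_neg (by omega), hd1get i hi]
      exact list_eq_single hl2
  have hTeq : T = tab2 d1 d2 := by
    apply List.ext_getElem (by rw [tab2_length hdlen]; omega)
    intro i hi hi2
    have hgd : T[i] = T.getD i [] := (List.getD_eq_getElem _ _ hi).symm
    have hgd2 : (tab2 d1 d2)[i] = (tab2 d1 d2).getD i [] := (List.getD_eq_getElem _ _ hi2).symm
    rw [hgd, hgd2, hrows i hi]
    rcases lt_or_ge i (2*p) with h | h
    · rw [if_pos h, tab2_getD_lo hdlen (by omega)]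
    · rw [if_neg (by omega), tab2_getD_mid hdlen (by omega) (by omega)]
  have hd1consec : ∀ i, i + 1 < d1.length → d1.getD i 0 < d1.getD (i+1) 0 := by
    intro i hi
    apply hcol i 0
    · rw [hrows i (by omega)]
      split <;> simp
    · rw [hrows (i+1) (by omega)]
      split <;> simp
  have hd2consec : ∀ i, i + 1 < d2.length → d2.getD i 0 < d2.getD (i+1) 0 := by
    intro i hi
    apply hcol i 1
    · rw [hrows i (by omega), if_pos (by omega)]
      simp
    · rw [hrows (i+1) (by omega), if_pos (by omega)]
      simp
  have hs1 : d1.Pairwise (· < ·) := sorted_of_consec hd1consec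
  have hs2 : d2.Pairwise (· < ·) := sorted_of_consec hd2consec
  have hrowpair : ∀ k, k < d2.length → d1.getD k 0 < d2.getD k 0 := by
    intro k hk
    have hkT : k < T.length := by omega
    have hmem : T.getD k [] ∈ T := by
      rw [List.getD_eq_getElem _ _ hkT]
      exact List.getElem_mem _
    have hsr := hrowsort _ hmem
    rw [hrows k hkT, if_pos (by omega)] at hsr
    simp only [List.pairwise_cons, List.mem_singleton, List.mem_cons] at hsr
    have := hsr.1 (d2.getD k 0) (by simp)
    exact this
  have hperm12 : (d1 ++ d2).Perm (List.range' 1 (2*m)) := by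
    have h1 := (tab2_flatten_perm hdlen).symm
    rw [← hTeq] at h1
    exact h1.trans hflat
  refine ⟨(List.range' 1 (2*m)).map (fun u => decide (u ∈ d2)), by simp, ?_, ?_, ?_⟩
  · apply ballot_cols_mpr
    · rw [colsAux_reconstruct (2*m) 1 d1 d2 hs1 hs2 hperm12]
      exact hdlen
    · rw [colsAux_reconstruct (2*m) 1 d1 d2 hs1 hs2 hperm12]
      exact hrowpair
  · have := (colsAux_length ((List.range' 1 (2*m)).map (fun u => decide (u ∈ d2))) 1).2
    rw [colsAux_reconstruct (2*m) 1 d1 d2 hs1 hs2 hperm12] at this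
    simp only at this
    rw [← this, hd2len]
    exact ⟨p, by omega⟩
  · rw [tab, colsAux_reconstruct (2*m) 1 d1 d2 hs1 hs2 hperm12]
    exact hTeq.symm


theorem card_words (m : ℕ) :
    Nat.card {w : List Bool // w.length = 2*m ∧ ballot w ∧ Even (w.count true)}
      = Nat.choose (2*m - 1) m := by
  classical
  set l := (lists (2*m)).filter (fun w => ballotB w && decide (Even (w.count true))) with hl
  have hnd : l.Nodup := (nodup_lists _).filter _
  have hset : {w : List Bool | w.length = 2*m ∧ ballot w ∧ Even (w.count true)}
      = (↑l.toFinset : Set (List Bool)) := by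
    ext w
    simp only [Set.mem_setOf_eq, Finset.coe_sort_coe, List.coe_toFinset, Set.mem_setOf_eq,
      hl, List.mem_filter, mem_lists, Bool.and_eq_true, decide_eq_true_eq, ballotB_iff]
  have h1 : Nat.card {w : List Bool // w.length = 2*m ∧ ballot w ∧ Even (w.count true)}
      = (↑l.toFinset : Set (List Bool)).ncard := by
    rw [← Nat.card_coe_set_eq, ← hset]
    rfl
  rw [h1, Set.ncard_coe_finset, List.toFinset_card_of_nodup hnd, ← En_eq m]

end CSDS

/-- the number of standard Young tableaux with entries `{1, …, 2m}`
of shape `(2^{2p}, 1^{2q})` for some `p, q` with `4p + 2q = 2m` is `C(2m-1, m)`. -/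
theorem count_standard_double_shapes (m : ℕ) :
    Nat.card {T : List (List ℕ) // IsStandard T (2 * m) ∧ ∃ p q : ℕ,
      4 * p + 2 * q = 2 * m ∧
      T.map List.length = List.replicate (2 * p) 2 ++ List.replicate (2 * q) 1} =
    Nat.choose (2 * m - 1) m := by
  classical
  rw [← CSDS.card_words m]
  symm
  apply Nat.card_eq_of_bijective
    (f := fun w : {w : List Bool // w.length = 2*m ∧ CSDS.ballot w ∧ Even (w.count true)} =>
      (⟨CSDS.tab w.1, CSDS.tab_spec w.2.1 w.2.2.1 w.2.2.2⟩ :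
        {T : List (List ℕ) // IsStandard T (2 * m) ∧ ∃ p q : ℕ,
          4 * p + 2 * q = 2 * m ∧
          T.map List.length = List.replicate (2 * p) 2 ++ List.replicate (2 * q) 1}))
  constructor
  · rintro ⟨w, hw⟩ ⟨w', hw'⟩ h
    exact Subtype.ext (CSDS.tab_inj hw.1 hw'.1 hw.2.1 hw'.2.1 (congrArg Subtype.val h))
  · rintro ⟨T, hT, p, q, hpq, hsh⟩
    obtain ⟨w, h1, h2, h3, h4⟩ := CSDS.tab_surj hT p q hpq hsh
    exact ⟨⟨w, h1, h2, h3⟩, Subtype.ext h4⟩
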